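/- In the situation below, assume n_i < ∞ for all i = 1,…,d, and assume that the Janet basis J for ⟨p_1,…,p_d⟩ is the Janet decomposition of an auto-reduced finite set G with ⟨G⟩ = ⟨p_1,…,p_d⟩. For each i let b_i be the element with (b_i,μ_i) ∈ J and lm(b_i) = φ^{n_i}·κ_i. Then for every w = φ^j·κ_i ∈ W_gen (i.e., 0 ≤ j < n_i): NF(φ·w, J) = φ·w if j < n_i − 1, and NF(φ·w, J) = φ·w − lc(b_i)^{−1}·b_i if j = n_i − 1. -/

import Mathlib

/-!
Common setup: the skew polynomial ring `D = K{φ,ρ}` (with commuting endomorphisms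
`γφ, γρ : K → K`, `φ·x = γφ(x)·φ`, `ρ·x = γρ(x)·ρ`), the free left `D`-module
`𝓕 = ⊕_{i=1}^d D κ_i`, its monomials `φ^k ρ^j κ_i`, the monomial order, cones,
Janet bases, and the data attached to a `D`-module `M` that is free over `K⟨φ⟩`.

`𝓕` is realized concretely as finitely supported coefficient functions on the
set of monomial indices `(i, k, j) ↔ φ^k ρ^j κ_i`; multiplication by `φ` resp. `ρ`
is the K-semilinear shift operator `PhiMul` resp. `RhoMul`.
-/

namespace JanetSetup

/-- Index of a monomial `φ^k ρ^j κ_i` of `𝓕`: the triple `(i, k, j)`. -/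
abbrev MonIx (d : ℕ) := Fin d × ℕ × ℕ

/-- The free module `𝓕 = ⊕_{i=1}^d D κ_i`, as coefficient functions on monomials. -/
abbrev Fr (K : Type) [Field K] (d : ℕ) : Type := MonIx d →₀ K

variable {K : Type} [Field K] {d : ℕ}

/-- Left multiplication by the variable `φ` on `𝓕`. -/
noncomputable def PhiMul (γφ : K →+* K) (f : Fr K d) : Fr K d :=
  Finsupp.mapDomain (fun m => (m.1, m.2.1 + 1, m.2.2))
    (Finsupp.mapRange (fun x => γφ x) (map_zero γφ) f)

/-- Left multiplication by the variable `ρ` on `𝓕`. -/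
noncomputable def RhoMul (γρ : K →+* K) (f : Fr K d) : Fr K d :=
  Finsupp.mapDomain (fun m => (m.1, m.2.1, m.2.2 + 1))
    (Finsupp.mapRange (fun x => γρ x) (map_zero γρ) f)

/-- The left `D`-submodule of `𝓕` generated by a set `s` (as a `K`-subspace:
the `K`-span of all `φ^k ρ^j g`, `g ∈ s`). -/
noncomputable def DSpan (γφ γρ : K →+* K) (s : Set (Fr K d)) : Submodule K (Fr K d) :=
  Submodule.span K
    {x | ∃ (k j : ℕ) (g : Fr K d), g ∈ s ∧ x = (PhiMul γφ)^[k] ((RhoMul γρ)^[j] g)}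

/-- The monomial order: lexicographic with `ρ ≺ φ`, position-over-term with
`κ_{i₁} ≻ κ_{i₂}` for `i₁ < i₂`. -/
def MLt (a b : MonIx d) : Prop :=
  b.1 < a.1 ∨ (a.1 = b.1 ∧ (a.2.1 < b.2.1 ∨ (a.2.1 = b.2.1 ∧ a.2.2 < b.2.2)))

/-- `m` is the leading monomial of `f`. -/
def IsLm (f : Fr K d) (m : MonIx d) : Prop :=
  m ∈ f.support ∧ ∀ m' ∈ f.support, m' ≠ m → MLt m' m

/-- The `μ`-cone of a monomial `m`; `μ = (φ ∈ μ, ρ ∈ μ)` as a pair of Booleans. -/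
def Cone (μ : Bool × Bool) (m : MonIx d) : Set (MonIx d) :=
  {x | ∃ a b : ℕ, (μ.1 = true ∨ a = 0) ∧ (μ.2 = true ∨ b = 0) ∧
      x = (m.1, m.2.1 + a, m.2.2 + b)}

/-- A Janet basis `{(b_1,μ_1),…,(b_r,μ_r)}` for the submodule `N ⊆ 𝓕`:
the `b_i` generate `N` as a left `D`-module and the set of leading monomials of
nonzero elements of `N` is the disjoint union of the cones `Mon(μ_i)·lm(b_i)`. -/
structure JanetBasis (γφ γρ : K →+* K) (d : ℕ) (N : Submodule K (Fr K d)) where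
  r : ℕ
  b : Fin r → Fr K d
  μ : Fin r → Bool × Bool
  /-- the leading monomial of `b i` -/
  lmb : Fin r → MonIx d
  b_ne : ∀ i, b i ≠ 0
  b_lm : ∀ i, IsLm (b i) (lmb i)
  pair_inj : Function.Injective fun i => (b i, μ i)
  span_eq : DSpan γφ γρ (Set.range b) = N
  lm_cover : ∀ f ∈ N, f ≠ 0 → ∀ m, IsLm f m → ∃ i, m ∈ Cone (μ i) (lmb i)
  cone_lm : ∀ i, ∀ m ∈ Cone (μ i) (lmb i), ∃ f ∈ N, f ≠ 0 ∧ IsLm f m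
  disj : ∀ i i' m, m ∈ Cone (μ i) (lmb i) → m ∈ Cone (μ i') (lmb i') → i = i'

variable (γφ γρ : K →+* K)

/-- `f` is reduced (in normal form) w.r.t. the pairs of `J` indexed by `P`:
no monomial of `f` lies in one of the corresponding cones. -/
def IsReduced {N : Submodule K (Fr K d)} (J : JanetBasis γφ γρ d N)
    (P : Set (Fin J.r)) (f : Fr K d) : Prop :=
  ∀ m ∈ f.support, ∀ i ∈ P, m ∉ Cone (J.μ i) (J.lmb i)

/-- `h` is the normal form `NF(g, ·)` of `g` with respect to the pairs of `J`
indexed by `P`: the reduction process subtracts left multiples of the `b i`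
(`i ∈ P`), so `g - h` lies in the `D`-span of these, and the result is reduced. -/
def IsNFOf {N : Submodule K (Fr K d)} (J : JanetBasis γφ γρ d N)
    (P : Set (Fin J.r)) (g h : Fr K d) : Prop :=
  g - h ∈ DSpan γφ γρ (J.b '' P) ∧ IsReduced γφ γρ J P h

/-- The projection `pr : 𝓕 → M`, `φ^k ρ^j κ_i ↦ F^k S^j κ̄_i`, for a `D`-module `M`
with `φ`-action `F`, `ρ`-action `S` and distinguished elements `κb i = κ̄_i`. -/
noncomputable def pr {M : Type} [AddCommGroup M] [Module K M]
    (F S : M →+ M) (κb : Fin d → M) (f : Fr K d) : M :=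
  f.sum fun m x => x • F^[m.2.1] (S^[m.2.2] (κb m.1))

/-- The relation `p_i = ρ κ_i − Σ_j D_{ij} κ_j ∈ 𝓕`, where the entry `D_{ij} ∈ K⟨φ⟩`
is recorded as the finitely supported coefficient function of its powers of `φ`. -/
noncomputable def pelt (Dmat : Fin d → Fin d → (ℕ →₀ K)) (i : Fin d) : Fr K d :=
  Finsupp.single (i, 0, 1) (1 : K)
    - ∑ j : Fin d, (Dmat i j).sum fun k x => Finsupp.single (j, k, 0) x

/-- `n_i = inf{n | ∃ (b,μ) ∈ J, lm(b) = φ^n κ_i} ∈ ℕ∪{∞}`. -/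
noncomputable def nVal {N : Submodule K (Fr K d)} (J : JanetBasis γφ γρ d N)
    (i : Fin d) : ℕ∞ :=
  sInf {c : ℕ∞ | ∃ n : ℕ, c = n ∧ ∃ ix, J.lmb ix = (i, n, 0)}

/-- `m_i = inf{n | ∃ (b,μ) ∈ J, ∃ l ≥ 0, lm(b) = φ^n ρ^l κ_i} ∈ ℕ∪{∞}`. -/
noncomputable def mVal {N : Submodule K (Fr K d)} (J : JanetBasis γφ γρ d N)
    (i : Fin d) : ℕ∞ :=
  sInf {c : ℕ∞ | ∃ n : ℕ, c = n ∧ ∃ ix l, J.lmb ix = (i, n, l)}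

/-- `W_gen = {φ^j κ_i | 1 ≤ i ≤ d, 0 ≤ j < n_i} ⊆ 𝓕`. -/
def Wgen {N : Submodule K (Fr K d)} (J : JanetBasis γφ γρ d N) : Set (Fr K d) :=
  {w | ∃ (i : Fin d) (j : ℕ), (j : ℕ∞) < nVal γφ γρ J i ∧
      w = Finsupp.single (i, j, 0) (1 : K)}

/-- `W_ind = {φ^j κ_i | 1 ≤ i ≤ d, 0 ≤ j < m_i} ⊆ 𝓕`. -/
def Wind {N : Submodule K (Fr K d)} (J : JanetBasis γφ γρ d N) : Set (Fr K d) :=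
  {w | ∃ (i : Fin d) (j : ℕ), (j : ℕ∞) < mVal γφ γρ J i ∧
      w = Finsupp.single (i, j, 0) (1 : K)}

end JanetSetup

namespace JanetSetup

variable {K : Type} [Field K] {d : ℕ}

/-- `G` (a finite subset of `𝓕 ∖ {0}`, recorded with its leading monomials `lmg`)
is auto-reduced: no monomial of a `g ∈ G` lies in the full cone
`Mon({φ,ρ})·lm(g')` of another `g' ∈ G`. -/
def AutoReduced {s : ℕ} (G : Fin s → Fr K d) (lmg : Fin s → MonIx d) : Prop :=
  (∀ a, G a ≠ 0 ∧ IsLm (G a) (lmg a)) ∧ Function.Injective G ∧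
    ∀ a, ∀ m ∈ (G a).support, ∀ a', a' ≠ a → m ∉ Cone (true, true) (lmg a')

/-- (For `G` ordered by descending leading monomials:) `a` is the first index of
`G` whose leading monomial is a multiple of its `κ`-index. -/
def IsFirst {s : ℕ} (lmg : Fin s → MonIx d) (a : Fin s) : Prop :=
  ∀ a' : Fin s, a' < a → (lmg a').1 ≠ (lmg a).1

/-- The set of pairs produced by the Janet decomposition of the (descendingly
ordered, auto-reduced) family `G`: the first element for each `κ`-index
contributes `(g_j, {φ,ρ})`; every other `g_j` contributes the pairs
`(φ^k g_j, {ρ})` for `0 ≤ k < deg_φ(lm g_{j-1}) − deg_φ(lm g_j)`. -/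
def JanetDecompPairs (γφ : K →+* K) {s : ℕ} (G : Fin s → Fr K d)
    (lmg : Fin s → MonIx d) : Set (Fr K d × (Bool × Bool)) :=
  {q | ∃ a : Fin s, IsFirst lmg a ∧ q = (G a, (true, true))} ∪
  {q | ∃ (a a' : Fin s) (k : ℕ), ¬ IsFirst lmg a ∧ (a' : ℕ) + 1 = (a : ℕ) ∧
      k + (lmg a).2.1 < (lmg a').2.1 ∧ q = ((PhiMul γφ)^[k] (G a), (false, true))}

/-- `J` is the Janet decomposition of the auto-reduced family `G`
(ordered descendingly by leading monomials). -/
def IsJanetDecompOf (γφ γρ : K →+* K) {N : Submodule K (Fr K d)}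
    (J : JanetBasis γφ γρ d N) {s : ℕ} (G : Fin s → Fr K d)
    (lmg : Fin s → MonIx d) : Prop :=
  AutoReduced G lmg ∧ (∀ a b : Fin s, a < b → MLt (lmg b) (lmg a)) ∧
    {q : Fr K d × (Bool × Bool) | ∃ i, q = (J.b i, J.μ i)} = JanetDecompPairs γφ G lmg

end JanetSetup

open JanetSetup

namespace JanetAux
open JanetSetup

variable {K : Type} [Field K] {d : ℕ}

lemma mlt_asymm {a b : MonIx d} (h1 : MLt a b) (h2 : MLt b a) : False := by
  obtain ⟨i1, k1, j1⟩ := a; obtain ⟨i2, k2, j2⟩ := b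
  simp only [MLt, Fin.lt_def, Fin.ext_iff] at h1 h2
  omega

lemma lm_unique {f : Fr K d} {m m' : MonIx d} (h : IsLm f m) (h' : IsLm f m') :
    m = m' := by
  by_contra hne
  exact mlt_asymm (h.2 m' h'.1 (Ne.symm hne)) (h'.2 m h.1 hne)

lemma shift_inj :
    Function.Injective (fun m : MonIx d => ((m.1, m.2.1 + 1, m.2.2) : MonIx d)) := by
  rintro ⟨i1, k1, j1⟩ ⟨i2, k2, j2⟩ h
  simp only [Prod.mk.injEq] at h
  simp only [Prod.mk.injEq]
  exact ⟨h.1, by omega, h.2.2⟩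

lemma phiMul_single (γφ : K →+* K) (m : MonIx d) (x : K) :
    PhiMul γφ (Finsupp.single m x)
      = Finsupp.single (m.1, m.2.1 + 1, m.2.2) (γφ x) := by
  unfold PhiMul
  rw [Finsupp.mapRange_single, Finsupp.mapDomain_single]

lemma phiMul_single' (γφ : K →+* K) (i : Fin d) (k j : ℕ) (x : K) :
    PhiMul γφ (Finsupp.single ((i, k, j) : MonIx d) x)
      = Finsupp.single ((i, k + 1, j) : MonIx d) (γφ x) :=
  phiMul_single γφ (i, k, j) x

lemma phiMul_apply_succ (γφ : K →+* K) (f : Fr K d) (i : Fin d) (k j : ℕ) :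
    PhiMul γφ f (i, k + 1, j) = γφ (f (i, k, j)) := by
  unfold PhiMul
  rw [show ((i, k + 1, j) : MonIx d)
      = (fun m : MonIx d => ((m.1, m.2.1 + 1, m.2.2) : MonIx d)) (i, k, j) from rfl,
    Finsupp.mapDomain_apply shift_inj, Finsupp.mapRange_apply]

lemma phiMul_apply_zero (γφ : K →+* K) (f : Fr K d) (i : Fin d) (j : ℕ) :
    PhiMul γφ f (i, 0, j) = 0 := by
  unfold PhiMul
  refine Finsupp.mapDomain_notin_range _ _ ?_
  rintro ⟨⟨i', k', j'⟩, hm⟩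
  simp only [Prod.mk.injEq] at hm
  omega

lemma mem_support_phiMul {γφ : K →+* K} {f : Fr K d} {m : MonIx d}
    (h : m ∈ (PhiMul γφ f).support) :
    ∃ k, m = (m.1, k + 1, m.2.2) ∧ (m.1, k, m.2.2) ∈ f.support := by
  obtain ⟨i, kk, j⟩ := m
  rcases kk with _ | k
  · exfalso
    rw [Finsupp.mem_support_iff, phiMul_apply_zero] at h
    exact h rfl
  · refine ⟨k, rfl, ?_⟩
    rw [Finsupp.mem_support_iff] at h ⊢
    rw [phiMul_apply_succ] at h
    intro h0
    rw [h0, map_zero] at h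
    exact h rfl

lemma mem_support_phiMul' {γφ : K →+* K} {f : Fr K d} {i : Fin d} {k j : ℕ}
    (h : (i, k, j) ∈ f.support) : ((i, k + 1, j) : MonIx d) ∈ (PhiMul γφ f).support := by
  rw [Finsupp.mem_support_iff] at h ⊢
  rw [phiMul_apply_succ]
  exact fun h0 => h (γφ.injective (by rw [h0, map_zero]))

lemma mlt_shift {i1 i2 : Fin d} {k1 j1 k2 j2 : ℕ} (h : MLt (i1, k1, j1) (i2, k2, j2)) :
    MLt (i1, k1 + 1, j1) (i2, k2 + 1, j2) := by
  unfold MLt at h ⊢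
  simp only at h ⊢
  rcases h with h | ⟨h1, h2⟩
  · exact Or.inl h
  · exact Or.inr ⟨h1, by omega⟩

lemma isLm_phiMul {γφ : K →+* K} {f : Fr K d} {m : MonIx d} (h : IsLm f m) :
    IsLm (PhiMul γφ f) (m.1, m.2.1 + 1, m.2.2) := by
  obtain ⟨i, k, j⟩ := m
  constructor
  · exact mem_support_phiMul' h.1
  · intro m' hm' hne
    obtain ⟨k', hk', hmem⟩ := mem_support_phiMul hm'
    obtain ⟨i', kk', j'⟩ := m'
    simp only [Prod.mk.injEq] at hk'
    rcases eq_or_ne ((i', k', j') : MonIx d) (i, k, j) with he | hne'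
    · exfalso
      apply hne
      simp only [Prod.mk.injEq] at he ⊢
      exact ⟨he.1, by omega, he.2.2⟩
    · have := h.2 _ hmem hne'
      have h2 := mlt_shift this
      have : kk' = k' + 1 := hk'.2.1
      rw [this]
      exact h2

lemma isLm_phiMul_iter {γφ : K →+* K} {f : Fr K d} {m : MonIx d} (h : IsLm f m)
    (k : ℕ) : IsLm ((PhiMul γφ)^[k] f) (m.1, m.2.1 + k, m.2.2) := by
  induction k with
  | zero => simpa using h
  | succ n ih =>
    rw [Function.iterate_succ_apply']
    exact isLm_phiMul ih

lemma nVal_le {γφ γρ : K →+* K} {N : Submodule K (Fr K d)} {J : JanetBasis γφ γρ d N}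
    {i : Fin d} {n : ℕ} {ix : Fin J.r} (h : J.lmb ix = (i, n, 0)) :
    nVal γφ γρ J i ≤ (n : ℕ∞) :=
  sInf_le ⟨n, rfl, ix, h⟩

lemma not_mem_cone_of_lt_nVal {γφ γρ : K →+* K} {N : Submodule K (Fr K d)}
    {J : JanetBasis γφ γρ d N} {i : Fin d} {k : ℕ}
    (hk : (k : ℕ∞) < nVal γφ γρ J i) (ix : Fin J.r) :
    ((i, k, 0) : MonIx d) ∉ Cone (J.μ ix) (J.lmb ix) := by
  rintro ⟨a, b, -, -, heq⟩
  rcases hl : J.lmb ix with ⟨i0, k0, j0⟩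
  rw [hl] at heq
  simp only [Prod.mk.injEq] at heq
  obtain ⟨h1, h2, h3⟩ := heq
  have hj0 : j0 = 0 := by omega
  have h2' : nVal γφ γρ J i ≤ (k0 : ℕ∞) := nVal_le (by rw [hl, ← h1, hj0])
  have h3' : (k0 : ℕ∞) ≤ (k : ℕ∞) := Nat.cast_le.mpr (by omega)
  exact absurd hk (not_lt.mpr (h2'.trans h3'))

lemma not_mlt_cone_self {p : MonIx d} {α β : ℕ} :
    ¬ MLt (p.1, p.2.1 + α, p.2.2 + β) p := by
  intro h
  unfold MLt at h
  simp only at h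
  rcases h with h | ⟨-, h | ⟨-, h⟩⟩
  · exact lt_irrefl _ h
  · omega
  · omega

lemma lmb_cases {γφ γρ : K →+* K} {N : Submodule K (Fr K d)}
    {J : JanetBasis γφ γρ d N} {s : ℕ} {G : Fin s → Fr K d} {lmg : Fin s → MonIx d}
    (hJD : IsJanetDecompOf γφ γρ J G lmg) (ix : Fin J.r) :
    ∃ (a : Fin s) (k : ℕ), J.b ix = (PhiMul γφ)^[k] (G a) ∧
      J.lmb ix = ((lmg a).1, (lmg a).2.1 + k, (lmg a).2.2) ∧
      (k = 0 ∨ (¬ IsFirst lmg a ∧ ∃ a' : Fin s, (a' : ℕ) + 1 = (a : ℕ) ∧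
        k + (lmg a).2.1 < (lmg a').2.1)) := by
  have hmem : (J.b ix, J.μ ix) ∈ JanetDecompPairs γφ G lmg := by
    rw [← hJD.2.2]; exact ⟨ix, rfl⟩
  rcases hmem with ⟨a, hfirst, heq⟩ | ⟨a, a', k, hnf, hsucc, hlt, heq⟩
  · simp only [Prod.mk.injEq] at heq
    refine ⟨a, 0, by simpa using heq.1, ?_, Or.inl rfl⟩
    have h1 : IsLm (J.b ix) (J.lmb ix) := J.b_lm ix
    rw [heq.1] at h1
    have h2 : IsLm (G a) ((lmg a).1, (lmg a).2.1 + 0, (lmg a).2.2) := by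
      simpa using (hJD.1.1 a).2
    exact lm_unique h1 h2
  · simp only [Prod.mk.injEq] at heq
    refine ⟨a, k, heq.1, ?_, Or.inr ⟨hnf, a', hsucc, hlt⟩⟩
    have h1 : IsLm (J.b ix) (J.lmb ix) := J.b_lm ix
    rw [heq.1] at h1
    exact lm_unique h1 (isLm_phiMul_iter (hJD.1.1 a).2 k)

lemma not_mem_cone_of_lm_max {γφ γρ : K →+* K} {N : Submodule K (Fr K d)}
    {J : JanetBasis γφ γρ d N} {s : ℕ} {G : Fin s → Fr K d} {lmg : Fin s → MonIx d}
    (hJD : IsJanetDecompOf γφ γρ J G lmg) {a : Fin s} {m : MonIx d}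
    (hm : m ∈ (G a).support) (hne : m ≠ lmg a) (ix : Fin J.r) :
    m ∉ Cone (J.μ ix) (J.lmb ix) := by
  intro hmem
  obtain ⟨a1, k, hb, hlmb, -⟩ := lmb_cases hJD ix
  obtain ⟨α, β, -, -, heq⟩ := hmem
  rw [hlmb] at heq
  have hfull : m ∈ Cone (true, true) (lmg a1) :=
    ⟨k + α, β, Or.inl rfl, Or.inl rfl, by rw [heq]; simp [Nat.add_assoc]⟩
  rcases eq_or_ne a1 a with rfl | hne'
  · obtain ⟨α', β', -, -, heq'⟩ := hfull
    have hlt := (hJD.1.1 a1).2.2 m hm hne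
    rw [heq'] at hlt
    exact not_mlt_cone_self hlt
  · exact hJD.1.2.2 a m hm a1 hne' hfull

end JanetAux


/-!
STATEMENT 13: for `w = φ^j κ_i ∈ W_gen` (so `0 ≤ j < n_i`): the normal form of
`φ·w` w.r.t. `J` is `φ·w` itself if `j < n_i − 1`, and it is
`φ·w − lc(b_i)⁻¹·b_i` if `j = n_i − 1`.
(`NF(g, J) = h` is expressed by the characterizing predicate `IsNFOf`:
`g − h` lies in the `D`-span of the `b`'s of `J` and `h` is reduced w.r.t. `J`;
for a Janet basis this determines `h` uniquely and agrees with the reduction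
algorithm.)
-/
theorem normal_form_of_phi_mul_Wgen
    {K : Type} [Field K] {d : ℕ} (γφ γρ : K →+* K)
    (hcomm : ∀ x : K, γφ (γρ x) = γρ (γφ x))
    {M : Type} [AddCommGroup M] [Module K M]
    -- `M` is a left `D`-module: `F` and `S` are the commuting semilinear actions
    -- of `φ` and `ρ` on `M`
    (F S : M →+ M)
    (hF : ∀ (x : K) (m : M), F (x • m) = γφ x • F m)
    (hS : ∀ (x : K) (m : M), S (x • m) = γρ x • S m)
    (hFS : ∀ m : M, F (S m) = S (F m))
    -- `M` is free of rank `d` as `K⟨φ⟩`-module with basis `κ̄_1, …, κ̄_d`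
    (κb : Fin d → M)
    (hli : LinearIndependent K fun p : Fin d × ℕ => F^[p.2] (κb p.1))
    (hsp : Submodule.span K (Set.range fun p : Fin d × ℕ => F^[p.2] (κb p.1)) = ⊤)
    -- the `ρ`-action on the basis is given by the matrix `D ∈ Mat_{d×d}(K⟨φ⟩)`
    (Dmat : Fin d → Fin d → (ℕ →₀ K))
    (hact : ∀ i, S (κb i) = ∑ j : Fin d, (Dmat i j).sum fun k x => x • F^[k] (κb j))
    -- `J` is a Janet basis of `⟨p_1, …, p_d⟩`
    (J : JanetBasis γφ γρ d (DSpan γφ γρ (Set.range (pelt Dmat))))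
    -- `J` is the Janet decomposition of an auto-reduced set `G` generating the
    -- same submodule as `p_1, …, p_d`
    {s : ℕ} (G : Fin s → Fr K d) (lmg : Fin s → MonIx d)
    (hGspan : DSpan γφ γρ (Set.range G) = DSpan γφ γρ (Set.range (pelt Dmat)))
    (hJD : IsJanetDecompOf γφ γρ J G lmg)
    -- `n_i < ∞` for all `i`
    (hfin : ∀ i : Fin d, nVal γφ γρ J i < ⊤)
    -- `(b_i, μ_i) ∈ J` is the pair with `lm(b_i) = φ^{n_i} κ_i`, indexed by `bi i`
    (bi : Fin d → Fin J.r)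
    (hbi : ∀ i : Fin d, ∃ n : ℕ, (n : ℕ∞) = nVal γφ γρ J i ∧ J.lmb (bi i) = (i, n, 0))
    :
    ∀ (i : Fin d) (j n : ℕ), (n : ℕ∞) = nVal γφ γρ J i → j < n →
      (j + 1 < n →
        IsNFOf γφ γρ J Set.univ
          (PhiMul γφ (Finsupp.single (i, j, 0) (1 : K)))
          (PhiMul γφ (Finsupp.single (i, j, 0) (1 : K)))) ∧
      (j + 1 = n →
        IsNFOf γφ γρ J Set.univ
          (PhiMul γφ (Finsupp.single (i, j, 0) (1 : K)))
          (PhiMul γφ (Finsupp.single (i, j, 0) (1 : K))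
            - (J.b (bi i) (J.lmb (bi i)))⁻¹ • J.b (bi i))) := by
  intro i j n hn hjn
  obtain ⟨n0, hn0, hlmbi⟩ := hbi i
  have hnn0 : n0 = n := by
    have h := hn0.trans hn.symm
    exact_mod_cast h
  rw [hnn0] at hlmbi
  constructor
  · -- case j + 1 < n : already reduced
    intro hj1
    constructor
    · simp only [sub_self]
      exact Submodule.zero_mem _
    · intro m hm ix _
      rw [JanetAux.phiMul_single', map_one,
        Finsupp.support_single_ne_zero _ one_ne_zero, Finset.mem_singleton] at hm
      subst hm
      have hcast : ((j + 1 : ℕ) : ℕ∞) < nVal γφ γρ J i := by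
        rw [← hn]; exact_mod_cast hj1
      exact JanetAux.not_mem_cone_of_lt_nVal hcast ix
  · -- case j + 1 = n
    intro hj1
    have hlcne : J.b (bi i) (J.lmb (bi i)) ≠ 0 :=
      Finsupp.mem_support_iff.mp (J.b_lm (bi i)).1
    have hg : PhiMul γφ (Finsupp.single ((i, j, 0) : MonIx d) (1 : K))
        = Finsupp.single ((i, n, 0) : MonIx d) 1 := by
      rw [JanetAux.phiMul_single', map_one, hj1]
    constructor
    · rw [sub_sub_cancel]
      refine Submodule.smul_mem _ _ (Submodule.subset_span ?_)
      exact ⟨0, 0, J.b (bi i), ⟨bi i, Set.mem_univ _, rfl⟩, rfl⟩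
    · -- reducedness of h = g - lc⁻¹ • b
      obtain ⟨a, k, hb, hlmb, hcase⟩ := JanetAux.lmb_cases hJD (bi i)
      rw [hlmbi] at hlmb
      rcases hla : lmg a with ⟨ia, ka, ja⟩
      rw [hla] at hlmb
      simp only [Prod.mk.injEq] at hlmb
      obtain ⟨hia, hka, hja⟩ := hlmb
      have hk0 : k = 0 := by
        rcases hcase with h | ⟨hnf, a', hsucc, hlt⟩
        · exact h
        · by_contra hkne
          have hpair : ((G a, (false, true)) : Fr K d × (Bool × Bool))
              ∈ JanetDecompPairs γφ G lmg := by
            refine Or.inr ⟨a, a', 0, hnf, hsucc, ?_, rfl⟩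
            omega
          rw [← hJD.2.2] at hpair
          obtain ⟨ix0, hix0⟩ := hpair
          simp only [Prod.mk.injEq] at hix0
          have h2 : IsLm (J.b ix0) ((i, ka, 0) : MonIx d) := by
            rw [← hix0.1]
            have hl := (hJD.1.1 a).2
            rw [hla] at hl
            rw [hia, hja]
            exact hl
          have hlm0 : J.lmb ix0 = ((i, ka, 0) : MonIx d) :=
            JanetAux.lm_unique (J.b_lm ix0) h2
          have hle := JanetAux.nVal_le hlm0
          rw [← hn] at hle
          have hlt2 : (ka : ℕ∞) < (n : ℕ∞) := Nat.cast_lt.mpr (by omega)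
          exact absurd hle (not_le.mpr hlt2)
      subst hk0
      have hbGa : J.b (bi i) = G a := hb
      have hlga : lmg a = ((i, n, 0) : MonIx d) := by
        rw [hla]
        simp only [Prod.mk.injEq]
        exact ⟨hia.symm, by omega, hja.symm⟩
      intro m hm ix _
      have hmh : m ∈ (G a).support ∧ m ≠ lmg a := by
        rw [Finsupp.mem_support_iff, Finsupp.sub_apply, Finsupp.smul_apply] at hm
        rcases eq_or_ne m ((i, n, 0) : MonIx d) with rfl | hmne
        · exfalso
          apply hm
          rw [hg, Finsupp.single_eq_same, ← hlmbi, smul_eq_mul,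
            inv_mul_cancel₀ hlcne, sub_self]
        · have hg0 : Finsupp.single ((i, n, 0) : MonIx d) (1 : K) m = 0 :=
            Finsupp.single_eq_of_ne' (Ne.symm hmne)
          rw [hg, hg0, zero_sub, neg_ne_zero] at hm
          have hbm : J.b (bi i) m ≠ 0 := by
            intro h0
            rw [h0, smul_zero] at hm
            exact hm rfl
          constructor
          · rw [Finsupp.mem_support_iff, ← hbGa]
            exact hbm
          · rw [hlga]
            exact hmne
      exact JanetAux.not_mem_cone_of_lm_max hJD hmh.1 hmh.2 ix
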